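/- For every d ∈ ℕ: (a) every element of the partition P(d+1) is either contained in V_{d+1} or disjoint from it, so V_{d+1} is a union of elements of P(d+1); and (b) if ω, ω′ ∈ Ω lie in the same element of the partition P(d)_2 and neither ω nor ω′ belongs to V_{d+1}, then ω and ω′ lie in the same element of P(d+1). -/

import Mathlib

open MeasureTheory Set Filter
open scoped ENNReal

noncomputable section

/-- The vector `(x 0, …, x d)` has ordinal pattern `π = (π 0, …, π d)`. -/
def HasOrdinalPattern {d : ℕ} (x : Fin (d + 1) → ℝ) (π : Equiv.Perm (Fin (d + 1))) : Prop :=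
  ∀ l : Fin d, x (π l.succ) < x (π l.castSucc) ∨
    (x (π l.castSucc) = x (π l.succ) ∧ π l.succ < π l.castSucc)

/-- The element `P_π` of the ordinal partition `P(d)` of order `d`:
points `ω ∈ Ω` such that `(T^[d] ω, T^[d-1] ω, …, T ω, ω)` has ordinal pattern `π`. -/
def ordCell (Ω : Set ℝ) (T : ℝ → ℝ) (d : ℕ) (π : Equiv.Perm (Fin (d + 1))) : Set ℝ :=
  {ω ∈ Ω | HasOrdinalPattern (fun i => T^[d - (i : ℕ)] ω) π}

/-- The element `P_{π₁…π_n}` of the partition `P(d)_n` corresponding to the `(n,d)`-word `w`. -/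
def wordCell (Ω : Set ℝ) (T : ℝ → ℝ) (d n : ℕ)
    (w : Fin n → Equiv.Perm (Fin (d + 1))) : Set ℝ :=
  {ω | ∀ i : Fin n, T^[(i : ℕ)] ω ∈ ordCell Ω T d (w i)}

/-- The set `V_d`. -/
def Vset (Ω : Set ℝ) (T : ℝ → ℝ) (d : ℕ) : Set ℝ :=
  {ω ∈ Ω |
    (ω < T^[d] ω ∧ ∀ l : ℕ, 1 ≤ l → l ≤ d - 1 → T^[l] ω ∉ Set.Ioo ω (T^[d] ω)) ∨
    (T^[d] ω ≤ ω ∧ ∀ l : ℕ, 1 ≤ l → l ≤ d - 1 → T^[l] ω ∉ Set.Icc (T^[d] ω) ω)}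

/-- The entropy `H(P(d))` of the ordinal partition of order `d`. -/
def ordEntropy (μ : Measure ℝ) (Ω : Set ℝ) (T : ℝ → ℝ) (d : ℕ) : ℝ :=
  ∑ π : Equiv.Perm (Fin (d + 1)), Real.negMulLog (μ (ordCell Ω T d π)).toReal

/-- The entropy `H(P(d)_n)` of the partition into `(n,d)`-word cells. -/
def wordEntropy (μ : Measure ℝ) (Ω : Set ℝ) (T : ℝ → ℝ) (d n : ℕ) : ℝ :=
  ∑ w : Fin n → Equiv.Perm (Fin (d + 1)), Real.negMulLog (μ (wordCell Ω T d n w)).toReal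

/-- `T` is (strong-)mixing with respect to `μ`. -/
def Mixing (μ : Measure ℝ) (T : ℝ → ℝ) : Prop :=
  ∀ A B : Set ℝ, MeasurableSet A → MeasurableSet B →
    Tendsto (fun n => μ (T^[n] ⁻¹' A ∩ B)) atTop (nhds (μ A * μ B))

/-- `T` is ergodic with respect to `μ`. -/
def IsErgodicMap (μ : Measure ℝ) (T : ℝ → ℝ) : Prop :=
  ∀ B : Set ℝ, MeasurableSet B → T ⁻¹' B = B → μ B = 0 ∨ μ B = 1

/-- The set `Ṽ_d(A)`. -/
def Vtilde (A : Set ℝ) (T : ℝ → ℝ) (d : ℕ) : Set ℝ :=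
  {ω ∈ A |
    (∀ l : ℕ, 1 ≤ l → l ≤ d - 1 → T^[l] ω ∉ {a ∈ A | a < ω}) ∨
    (∀ l : ℕ, 1 ≤ l → l ≤ d - 1 → T^[l] ω ∉ {a ∈ A | ω < a})}


namespace OPAux


variable {n : ℕ}

def OPkey (x : Fin n → ℝ) (i : Fin n) : ℝ ×ₗ Fin n := toLex (x i, i)

lemma OPkey_lt_iff (x : Fin n → ℝ) {i j : Fin n} :
    OPkey x i < OPkey x j ↔ x i < x j ∨ (x i = x j ∧ i < j) := Prod.Lex.lt_iff

lemma OPkey_lt_iff_of_not_lt (x : Fin n → ℝ) {i j : Fin n} (h : ¬ i < j) :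
    OPkey x i < OPkey x j ↔ x i < x j := by
  rw [OPkey_lt_iff]
  constructor
  · rintro (h1 | ⟨h1, h2⟩)
    · exact h1
    · exact absurd h2 h
  · exact Or.inl

lemma OPkey_injective (x : Fin n → ℝ) : Function.Injective (OPkey x) := by
  intro i j h
  have := congrArg (fun p => (ofLex p).2) h
  simpa [OPkey] using this

lemma hop_iff {d : ℕ} (x : Fin (d + 1) → ℝ) (π : Equiv.Perm (Fin (d + 1))) :
    HasOrdinalPattern x π ↔ ∀ l : Fin d, OPkey x (π l.succ) < OPkey x (π l.castSucc) := by
  unfold HasOrdinalPattern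
  refine forall_congr' fun l => ?_
  rw [OPkey_lt_iff]
  constructor
  · rintro (h | ⟨h1, h2⟩)
    · exact Or.inl h
    · exact Or.inr ⟨h1.symm, h2⟩
  · rintro (h | ⟨h1, h2⟩)
    · exact Or.inl h
    · exact Or.inr ⟨h1.symm, h2⟩

lemma strictAnti_of_hop {d : ℕ} {x : Fin (d + 1) → ℝ} {π : Equiv.Perm (Fin (d + 1))}
    (h : HasOrdinalPattern x π) : StrictAnti (OPkey x ∘ π) := by
  rw [hop_iff] at h
  exact Fin.strictAnti_iff_succ_lt.mpr h

lemma hop_pos_lt {d : ℕ} {x : Fin (d + 1) → ℝ} {π : Equiv.Perm (Fin (d + 1))}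
    (h : HasOrdinalPattern x π) (i j : Fin (d + 1)) :
    OPkey x i < OPkey x j ↔ π.symm j < π.symm i := by
  have := (strictAnti_of_hop h).lt_iff_gt (a := π.symm i) (b := π.symm j)
  simpa [Function.comp] using this

lemma exists_hop {d : ℕ} (x : Fin (d + 1) → ℝ) : ∃ π, HasOrdinalPattern x π := by
  set σ := Tuple.sort (OPkey x) with hσ
  have hmono : StrictMono (OPkey x ∘ σ) :=
    (Tuple.monotone_sort (OPkey x)).strictMono_of_injective
      ((OPkey_injective x).comp σ.injective)
  refine ⟨σ * Fin.revPerm, ?_⟩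
  rw [hop_iff]
  intro l
  have hlt : (l.succ).rev < (l.castSucc).rev := by
    rw [Fin.rev_lt_rev]; exact Fin.castSucc_lt_succ (i := l)
  have := hmono hlt
  simpa [Function.comp, Equiv.Perm.mul_apply] using this

lemma hop_of_rel_eq {d : ℕ} {x x' : Fin (d + 1) → ℝ} {π : Equiv.Perm (Fin (d + 1))}
    (hrel : ∀ i j, OPkey x i < OPkey x j ↔ OPkey x' i < OPkey x' j)
    (h : HasOrdinalPattern x π) : HasOrdinalPattern x' π := by
  rw [hop_iff] at h ⊢
  intro l; exact (hrel _ _).mp (h l)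

lemma no_middle_iff {m : ℕ} (π : Equiv.Perm (Fin m)) (a b : Fin m)
    (hab : π.symm a < π.symm b) :
    (∀ j : Fin m, j ≠ a → j ≠ b → ¬(π.symm a < π.symm j ∧ π.symm j < π.symm b)) ↔
      ((π.symm a : ℕ) + 1 = (π.symm b : ℕ)) := by
  constructor
  · intro h
    by_contra hne
    have h1 : ((π.symm a : ℕ) + 1) < (π.symm b : ℕ) := by
      have := (Fin.lt_def).mp hab; omega
    have hm : ((π.symm a : ℕ) + 1) < m := lt_trans h1 (π.symm b).isLt
    set k : Fin m := ⟨(π.symm a : ℕ) + 1, hm⟩ with hk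
    have hk1 : π.symm a < k := by rw [Fin.lt_def]; simp [hk]
    have hk2 : k < π.symm b := by rw [Fin.lt_def]; simpa [hk] using h1
    refine h (π k) ?_ ?_ ⟨?_, ?_⟩
    · intro he
      have : k = π.symm a := by rw [← he]; simp
      exact absurd this hk1.ne'
    · intro he
      have : k = π.symm b := by rw [← he]; simp
      exact absurd this hk2.ne
    · simpa using hk1
    · simpa using hk2
  · rintro h j hja hjb ⟨h1, h2⟩
    rw [Fin.lt_def] at h1 h2
    omega


def AdjPat (d : ℕ) (π : Equiv.Perm (Fin (d + 2))) : Prop :=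
  ((π.symm 0 : Fin (d + 2)) : ℕ) + 1 = ((π.symm (Fin.last (d + 1)) : Fin (d + 2)) : ℕ) ∨
  ((π.symm (Fin.last (d + 1)) : Fin (d + 2)) : ℕ) + 1 = ((π.symm 0 : Fin (d + 2)) : ℕ)

lemma mem_Vset_iff_adj (Ω : Set ℝ) (T : ℝ → ℝ) (d : ℕ) (π : Equiv.Perm (Fin (d + 2)))
    {ω : ℝ} (hω : ω ∈ ordCell Ω T (d + 1) π) :
    ω ∈ Vset Ω T (d + 1) ↔ AdjPat d π := by
  obtain ⟨hΩ, hop⟩ := hω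
  set x : Fin (d + 2) → ℝ := fun i => T^[(d + 1) - (i : ℕ)] ω with hxdef
  have hx0 : x 0 = T^[d + 1] ω := by simp [hxdef]
  have hxl : x (Fin.last (d + 1)) = ω := by simp [hxdef]
  have hlt : ∀ i j : Fin (d + 2), i < j → (x j < x i ↔ π.symm i < π.symm j) := by
    intro i j hij
    rw [← hop_pos_lt hop, OPkey_lt_iff]
    constructor
    · exact Or.inl
    · rintro (h | ⟨_, hc⟩)
      · exact h
      · exact absurd hc (lt_asymm hij)
  have hle : ∀ i j : Fin (d + 2), i < j → (x i ≤ x j ↔ π.symm j < π.symm i) := by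
    intro i j hij
    rw [← not_lt, hlt i j hij, not_lt]
    constructor
    · intro h
      exact h.lt_of_ne fun he => hij.ne (π.symm.injective he.symm)
    · exact le_of_lt
  have h0l : (0 : Fin (d + 2)) < Fin.last (d + 1) := by
    rw [Fin.lt_def]; simp
  have hbr : ω < T^[d + 1] ω ↔ π.symm 0 < π.symm (Fin.last (d + 1)) := by
    rw [← hx0, ← hxl]; exact hlt 0 (Fin.last (d + 1)) h0l
  have hbr' : T^[d + 1] ω ≤ ω ↔ π.symm (Fin.last (d + 1)) < π.symm 0 := by
    rw [← hx0, ← hxl]; exact hle 0 (Fin.last (d + 1)) h0l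
  have hTl : ∀ l : ℕ, (hl : l ≤ d + 1) → T^[l] ω = x ⟨d + 1 - l, by omega⟩ := by
    intro l hl
    show T^[l] ω = T^[(d + 1) - (d + 1 - l)] ω
    rw [Nat.sub_sub_self hl]
  have hIoo : ∀ j : Fin (d + 2), j ≠ 0 → j ≠ Fin.last (d + 1) →
      (x j ∈ Set.Ioo ω (T^[d + 1] ω) ↔ (π.symm 0 < π.symm j ∧ π.symm j < π.symm (Fin.last (d + 1)))) := by
    intro j hj0 hjl
    have hj0' : (0 : Fin (d + 2)) < j := Fin.pos_of_ne_zero hj0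
    have hjl' : j < Fin.last (d + 1) := lt_of_le_of_ne (Fin.le_last j) hjl
    rw [Set.mem_Ioo, ← hx0, ← hxl, hlt j (Fin.last (d + 1)) hjl', hlt 0 j hj0']
    exact and_comm
  have hIcc : ∀ j : Fin (d + 2), j ≠ 0 → j ≠ Fin.last (d + 1) →
      (x j ∈ Set.Icc (T^[d + 1] ω) ω ↔ (π.symm (Fin.last (d + 1)) < π.symm j ∧ π.symm j < π.symm 0)) := by
    intro j hj0 hjl
    have hj0' : (0 : Fin (d + 2)) < j := Fin.pos_of_ne_zero hj0
    have hjl' : j < Fin.last (d + 1) := lt_of_le_of_ne (Fin.le_last j) hjl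
    rw [Set.mem_Icc, ← hx0, ← hxl, hle 0 j hj0', hle j (Fin.last (d + 1)) hjl']
    exact and_comm
  have hval : ∀ j : Fin (d + 2), j ≠ 0 → j ≠ Fin.last (d + 1) → 1 ≤ (j : ℕ) ∧ (j : ℕ) ≤ d := by
    intro j hj0 hjl
    have h1 : (j : ℕ) ≠ 0 := fun he => hj0 (Fin.ext (by simpa using he))
    have h2 : (j : ℕ) ≠ d + 1 := fun he => hjl (Fin.ext (by simpa [Fin.val_last] using he))
    have := j.isLt
    omega
  have hmid1 : (∀ l : ℕ, 1 ≤ l → l ≤ d + 1 - 1 → T^[l] ω ∉ Set.Ioo ω (T^[d + 1] ω)) ↔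
      ∀ j : Fin (d + 2), j ≠ 0 → j ≠ Fin.last (d + 1) →
        ¬(π.symm 0 < π.symm j ∧ π.symm j < π.symm (Fin.last (d + 1))) := by
    constructor
    · intro h j hj0 hjl hcon
      obtain ⟨h1, h2⟩ := hval j hj0 hjl
      refine h (d + 1 - (j : ℕ)) (by omega) (by omega) ?_
      exact (hIoo j hj0 hjl).mpr hcon
    · intro h l h1 h2 hcon
      have hj0 : (⟨d + 1 - l, by omega⟩ : Fin (d + 2)) ≠ 0 := by
        intro he; have := congrArg Fin.val he; simp at this; omega
      have hjl : (⟨d + 1 - l, by omega⟩ : Fin (d + 2)) ≠ Fin.last (d + 1) := by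
        intro he; have := congrArg Fin.val he; simp [Fin.val_last] at this; omega
      refine h _ hj0 hjl ((hIoo _ hj0 hjl).mp ?_)
      rwa [← hTl l (by omega)]
  have hmid2 : (∀ l : ℕ, 1 ≤ l → l ≤ d + 1 - 1 → T^[l] ω ∉ Set.Icc (T^[d + 1] ω) ω) ↔
      ∀ j : Fin (d + 2), j ≠ 0 → j ≠ Fin.last (d + 1) →
        ¬(π.symm (Fin.last (d + 1)) < π.symm j ∧ π.symm j < π.symm 0) := by
    constructor
    · intro h j hj0 hjl hcon
      obtain ⟨h1, h2⟩ := hval j hj0 hjl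
      refine h (d + 1 - (j : ℕ)) (by omega) (by omega) ?_
      exact (hIcc j hj0 hjl).mpr hcon
    · intro h l h1 h2 hcon
      have hj0 : (⟨d + 1 - l, by omega⟩ : Fin (d + 2)) ≠ 0 := by
        intro he; have := congrArg Fin.val he; simp at this; omega
      have hjl : (⟨d + 1 - l, by omega⟩ : Fin (d + 2)) ≠ Fin.last (d + 1) := by
        intro he; have := congrArg Fin.val he; simp [Fin.val_last] at this; omega
      refine h _ hj0 hjl ((hIcc _ hj0 hjl).mp ?_)
      rwa [← hTl l (by omega)]
  have hV : ω ∈ Vset Ω T (d + 1) ↔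
      ((ω < T^[d + 1] ω ∧ ∀ l : ℕ, 1 ≤ l → l ≤ d + 1 - 1 → T^[l] ω ∉ Set.Ioo ω (T^[d + 1] ω)) ∨
       (T^[d + 1] ω ≤ ω ∧ ∀ l : ℕ, 1 ≤ l → l ≤ d + 1 - 1 → T^[l] ω ∉ Set.Icc (T^[d + 1] ω) ω)) := by
    simp only [Vset, Set.mem_setOf_eq]
    exact and_iff_right hΩ
  rw [hV, and_congr hbr hmid1, and_congr hbr' hmid2]
  constructor
  · rintro (⟨h1, h2⟩ | ⟨h1, h2⟩)
    · exact Or.inl ((no_middle_iff π 0 (Fin.last (d + 1)) h1).mp h2)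
    · exact Or.inr ((no_middle_iff π (Fin.last (d + 1)) 0 h1).mp
        (fun j hjl hj0 => h2 j hj0 hjl))
  · rintro (h | h)
    · have h1 : π.symm 0 < π.symm (Fin.last (d + 1)) := by rw [Fin.lt_def]; omega
      exact Or.inl ⟨h1, (no_middle_iff π 0 (Fin.last (d + 1)) h1).mpr h⟩
    · have h1 : π.symm (Fin.last (d + 1)) < π.symm 0 := by rw [Fin.lt_def]; omega
      exact Or.inr ⟨h1, fun j hj0 hjl =>
        (no_middle_iff π (Fin.last (d + 1)) 0 h1).mpr h j hjl hj0⟩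


end OPAux

section MainAux
open OPAux

variable {Ω : Set ℝ} {T : ℝ → ℝ} {d : ℕ}

lemma rel_transfer {ω ω' : ℝ}
    (hωΩ : ω ∈ Ω) (hω'Ω : ω' ∈ Ω)
    (hw : ∃ w : Fin 2 → Equiv.Perm (Fin (d + 1)),
      ω ∈ wordCell Ω T d 2 w ∧ ω' ∈ wordCell Ω T d 2 w)
    (hV : ω ∉ Vset Ω T (d + 1)) (hV' : ω' ∉ Vset Ω T (d + 1)) :
    ∀ i j : Fin (d + 2),
      OPkey (fun i : Fin (d + 2) => T^[(d + 1) - (i : ℕ)] ω) i <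
        OPkey (fun i : Fin (d + 2) => T^[(d + 1) - (i : ℕ)] ω) j ↔
      OPkey (fun i : Fin (d + 2) => T^[(d + 1) - (i : ℕ)] ω') i <
        OPkey (fun i : Fin (d + 2) => T^[(d + 1) - (i : ℕ)] ω') j := by
  obtain ⟨w, hwω, hwω'⟩ := hw
  set x : Fin (d + 2) → ℝ := fun i => T^[(d + 1) - (i : ℕ)] ω with hxdef
  set x' : Fin (d + 2) → ℝ := fun i => T^[(d + 1) - (i : ℕ)] ω' with hx'def
  have h0 : HasOrdinalPattern (fun i : Fin (d + 1) => T^[d - (i : ℕ)] ω) (w 0) := by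
    have := (hwω 0).2; simpa using this
  have h0' : HasOrdinalPattern (fun i : Fin (d + 1) => T^[d - (i : ℕ)] ω') (w 0) := by
    have := (hwω' 0).2; simpa using this
  have h1 : HasOrdinalPattern (fun i : Fin (d + 1) => T^[d - (i : ℕ)] (T ω)) (w 1) := by
    have := (hwω 1).2; simpa using this
  have h1' : HasOrdinalPattern (fun i : Fin (d + 1) => T^[d - (i : ℕ)] (T ω')) (w 1) := by
    have := (hwω' 1).2; simpa using this
  have hyx : ∀ (u : ℝ) (i : Fin (d + 1)),
      T^[d + 1 - ((i : ℕ) + 1)] u = T^[d - (i : ℕ)] u := by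
    intro u i; congr 1; omega
  have hzx : ∀ (u : ℝ) (i : Fin (d + 1)),
      T^[d + 1 - (i : ℕ)] u = T^[d - (i : ℕ)] (T u) := by
    intro u i
    rw [← Function.iterate_succ_apply]
    congr 1
    have := i.is_le
    omega
  have Hsucc : ∀ i j : Fin (d + 1),
      (OPkey x i.succ < OPkey x j.succ ↔ OPkey x' i.succ < OPkey x' j.succ) := by
    intro i j
    have e : ∀ (u : ℝ),
        HasOrdinalPattern (fun i : Fin (d + 1) => T^[d - (i : ℕ)] u) (w 0) →
        (OPkey (fun k : Fin (d + 2) => T^[(d + 1) - (k : ℕ)] u) i.succ <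
          OPkey (fun k : Fin (d + 2) => T^[(d + 1) - (k : ℕ)] u) j.succ ↔
          (w 0).symm j < (w 0).symm i) := by
      intro u hu
      rw [← hop_pos_lt hu i j]
      simp only [OPkey_lt_iff, Fin.val_succ]
      rw [hyx u i, hyx u j, Fin.succ_lt_succ_iff]
    exact (e ω h0).trans (e ω' h0').symm
  have Hcast : ∀ i j : Fin (d + 1),
      (OPkey x i.castSucc < OPkey x j.castSucc ↔ OPkey x' i.castSucc < OPkey x' j.castSucc) := by
    intro i j
    have e : ∀ (u : ℝ),
        HasOrdinalPattern (fun i : Fin (d + 1) => T^[d - (i : ℕ)] (T u)) (w 1) →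
        (OPkey (fun k : Fin (d + 2) => T^[(d + 1) - (k : ℕ)] u) i.castSucc <
          OPkey (fun k : Fin (d + 2) => T^[(d + 1) - (k : ℕ)] u) j.castSucc ↔
          (w 1).symm j < (w 1).symm i) := by
      intro u hu
      rw [← hop_pos_lt hu i j]
      simp only [OPkey_lt_iff, Fin.coe_castSucc]
      rw [hzx u i, hzx u j, Fin.castSucc_lt_castSucc_iff]
    exact (e ω h1).trans (e ω' h1').symm
  have hreal_succ : ∀ i j : Fin (d + 2), i ≠ 0 → j ≠ 0 → ¬ i < j →
      (x i < x j ↔ x' i < x' j) := by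
    intro i j hi hj hnl
    obtain ⟨i1, rfl⟩ := Fin.exists_succ_eq_of_ne_zero hi
    obtain ⟨j1, rfl⟩ := Fin.exists_succ_eq_of_ne_zero hj
    rw [← OPkey_lt_iff_of_not_lt x hnl, ← OPkey_lt_iff_of_not_lt x' hnl]
    exact Hsucc i1 j1
  have hreal_cast : ∀ i j : Fin (d + 2), i ≠ Fin.last (d + 1) → j ≠ Fin.last (d + 1) → ¬ i < j →
      (x i < x j ↔ x' i < x' j) := by
    intro i j hi hj hnl
    obtain ⟨i1, rfl⟩ := Fin.exists_castSucc_eq.mpr hi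
    obtain ⟨j1, rfl⟩ := Fin.exists_castSucc_eq.mpr hj
    rw [← OPkey_lt_iff_of_not_lt x hnl, ← OPkey_lt_iff_of_not_lt x' hnl]
    exact Hcast i1 j1
  have hlast0 : ¬ (Fin.last (d + 1)) < (0 : Fin (d + 2)) := Fin.not_lt_zero _
  have hlastne0 : (Fin.last (d + 1)) ≠ (0 : Fin (d + 2)) := by
    intro he; have := congrArg Fin.val he; simp [Fin.val_last] at this
  have h0nelast : (0 : Fin (d + 2)) ≠ Fin.last (d + 1) := fun he => hlastne0 he.symm
  have himp : ∀ (u u' : ℝ) (y y' : Fin (d + 2) → ℝ),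
      y = (fun i : Fin (d + 2) => T^[(d + 1) - (i : ℕ)] u) →
      u ∈ Ω → u ∉ Vset Ω T (d + 1) →
      (∀ i j : Fin (d + 2), i ≠ 0 → j ≠ 0 → ¬ i < j → (y i < y j ↔ y' i < y' j)) →
      (∀ i j : Fin (d + 2), i ≠ Fin.last (d + 1) → j ≠ Fin.last (d + 1) → ¬ i < j →
        (y i < y j ↔ y' i < y' j)) →
      (y (Fin.last (d + 1)) < y 0 → y' (Fin.last (d + 1)) < y' 0) := by
    intro u u' y y' hy huΩ huV hS hC hlt0
    have hy0 : y 0 = T^[d + 1] u := by simp [hy]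
    have hyl : y (Fin.last (d + 1)) = u := by simp [hy]
    have hnab : ¬((u < T^[d + 1] u ∧ ∀ l : ℕ, 1 ≤ l → l ≤ d + 1 - 1 →
          T^[l] u ∉ Set.Ioo u (T^[d + 1] u)) ∨
        (T^[d + 1] u ≤ u ∧ ∀ l : ℕ, 1 ≤ l → l ≤ d + 1 - 1 →
          T^[l] u ∉ Set.Icc (T^[d + 1] u) u)) := fun h => huV ⟨huΩ, h⟩
    push_neg at hnab
    obtain ⟨hA, _⟩ := hnab
    have hAh : u < T^[d + 1] u := by rw [← hy0, ← hyl]; exact hlt0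
    obtain ⟨l, hl1, hl2, hl3⟩ := hA hAh
    set j : Fin (d + 2) := ⟨d + 1 - l, by omega⟩ with hjdef
    have hj0 : j ≠ 0 := by
      intro he; have := congrArg Fin.val he; simp [hjdef] at this; omega
    have hjl : j ≠ Fin.last (d + 1) := by
      intro he; have := congrArg Fin.val he; simp [hjdef, Fin.val_last] at this; omega
    have hyj : y j = T^[l] u := by
      rw [hy]
      show T^[(d + 1) - (d + 1 - l)] u = T^[l] u
      rw [Nat.sub_sub_self (by omega : l ≤ d + 1)]
    obtain ⟨hm1, hm2⟩ := hl3
    have ha : y (Fin.last (d + 1)) < y j := by rw [hyl, hyj]; exact hm1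
    have hb : y j < y 0 := by rw [hyj, hy0]; exact hm2
    have ha' : y' (Fin.last (d + 1)) < y' j :=
      (hS (Fin.last (d + 1)) j hlastne0 hj0 (not_lt.mpr (Fin.le_last j))).mp ha
    have hb' : y' j < y' 0 :=
      (hC j 0 hjl h0nelast (Fin.not_lt_zero j)).mp hb
    exact lt_trans ha' hb'
  have himp2 : ∀ (u u' : ℝ) (y y' : Fin (d + 2) → ℝ),
      y = (fun i : Fin (d + 2) => T^[(d + 1) - (i : ℕ)] u) →
      u ∈ Ω → u ∉ Vset Ω T (d + 1) →
      (∀ i j : Fin (d + 2), i ≠ 0 → j ≠ 0 → ¬ i < j → (y i < y j ↔ y' i < y' j)) →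
      (∀ i j : Fin (d + 2), i ≠ Fin.last (d + 1) → j ≠ Fin.last (d + 1) → ¬ i < j →
        (y i < y j ↔ y' i < y' j)) →
      (y 0 ≤ y (Fin.last (d + 1)) → y' 0 ≤ y' (Fin.last (d + 1))) := by
    intro u u' y y' hy huΩ huV hS hC hle0
    have hy0 : y 0 = T^[d + 1] u := by simp [hy]
    have hyl : y (Fin.last (d + 1)) = u := by simp [hy]
    have hnab : ¬((u < T^[d + 1] u ∧ ∀ l : ℕ, 1 ≤ l → l ≤ d + 1 - 1 →
          T^[l] u ∉ Set.Ioo u (T^[d + 1] u)) ∨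
        (T^[d + 1] u ≤ u ∧ ∀ l : ℕ, 1 ≤ l → l ≤ d + 1 - 1 →
          T^[l] u ∉ Set.Icc (T^[d + 1] u) u)) := fun h => huV ⟨huΩ, h⟩
    push_neg at hnab
    obtain ⟨_, hB⟩ := hnab
    have hBh : T^[d + 1] u ≤ u := by rw [← hy0, ← hyl]; exact hle0
    obtain ⟨l, hl1, hl2, hl3⟩ := hB hBh
    set j : Fin (d + 2) := ⟨d + 1 - l, by omega⟩ with hjdef
    have hj0 : j ≠ 0 := by
      intro he; have := congrArg Fin.val he; simp [hjdef] at this; omega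
    have hjl : j ≠ Fin.last (d + 1) := by
      intro he; have := congrArg Fin.val he; simp [hjdef, Fin.val_last] at this; omega
    have hyj : y j = T^[l] u := by
      rw [hy]
      show T^[(d + 1) - (d + 1 - l)] u = T^[l] u
      rw [Nat.sub_sub_self (by omega : l ≤ d + 1)]
    obtain ⟨hm1, hm2⟩ := hl3
    have ha : ¬ y j < y 0 := by rw [hyj, hy0]; exact not_lt.mpr hm1
    have hb : ¬ y (Fin.last (d + 1)) < y j := by rw [hyl, hyj]; exact not_lt.mpr hm2
    have ha' : ¬ y' j < y' 0 := fun h =>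
      ha ((hC j 0 hjl h0nelast (Fin.not_lt_zero j)).mpr h)
    have hb' : ¬ y' (Fin.last (d + 1)) < y' j := fun h =>
      hb ((hS (Fin.last (d + 1)) j hlastne0 hj0 (not_lt.mpr (Fin.le_last j))).mpr h)
    exact le_trans (not_lt.mp ha') (not_lt.mp hb')
  have hS' : ∀ i j : Fin (d + 2), i ≠ 0 → j ≠ 0 → ¬ i < j → (x' i < x' j ↔ x i < x j) :=
    fun i j hi hj hnl => (hreal_succ i j hi hj hnl).symm
  have hC' : ∀ i j : Fin (d + 2), i ≠ Fin.last (d + 1) → j ≠ Fin.last (d + 1) → ¬ i < j →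
      (x' i < x' j ↔ x i < x j) :=
    fun i j hi hj hnl => (hreal_cast i j hi hj hnl).symm
  have Q : x (Fin.last (d + 1)) < x 0 ↔ x' (Fin.last (d + 1)) < x' 0 := by
    constructor
    · exact himp ω ω' x x' hxdef hωΩ hV hreal_succ hreal_cast
    · intro h
      by_contra hn
      have := himp2 ω ω' x x' hxdef hωΩ hV hreal_succ hreal_cast (not_lt.mp hn)
      exact absurd h (not_lt.mpr this)
  intro i j
  have h0lt : (0 : Fin (d + 2)) < Fin.last (d + 1) := by
    rw [Fin.lt_def]; simp
  by_cases hi0 : i = 0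
  · subst hi0
    by_cases hj0 : j = 0
    · subst hj0; exact iff_of_false (lt_irrefl _) (lt_irrefl _)
    · by_cases hjl : j = Fin.last (d + 1)
      · subst hjl
        rw [OPkey_lt_iff, OPkey_lt_iff]
        have e : ∀ y : Fin (d + 2) → ℝ,
            ((y 0 < y (Fin.last (d + 1)) ∨
              (y 0 = y (Fin.last (d + 1)) ∧ (0 : Fin (d + 2)) < Fin.last (d + 1))) ↔
              ¬ y (Fin.last (d + 1)) < y 0) := by
          intro y
          constructor
          · rintro (h | ⟨h, _⟩)
            · exact not_lt.mpr (le_of_lt h)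
            · exact not_lt.mpr (le_of_eq h)
          · intro h
            rcases lt_or_eq_of_le (not_lt.mp h) with h1 | h1
            · exact Or.inl h1
            · exact Or.inr ⟨h1, h0lt⟩
        rw [e x, e x', not_iff_not]
        exact Q
      · obtain ⟨j1, rfl⟩ := Fin.exists_castSucc_eq.mpr hjl
        simpa using Hcast 0 j1
  · by_cases hj0 : j = 0
    · subst hj0
      by_cases hil : i = Fin.last (d + 1)
      · subst hil
        rw [OPkey_lt_iff_of_not_lt x hlast0, OPkey_lt_iff_of_not_lt x' hlast0]
        exact Q
      · obtain ⟨i1, rfl⟩ := Fin.exists_castSucc_eq.mpr hil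
        simpa using Hcast i1 0
    · obtain ⟨i1, rfl⟩ := Fin.exists_succ_eq_of_ne_zero hi0
      obtain ⟨j1, rfl⟩ := Fin.exists_succ_eq_of_ne_zero hj0
      exact Hsucc i1 j1

end MainAux

/-- (a) every element of `P(d+1)` is contained in or disjoint from
`V_{d+1}`, so `V_{d+1}` is a union of elements of `P(d+1)`; (b) if `ω, ω'` lie in the
same element of `P(d)_2` and neither belongs to `V_{d+1}`, then they lie in the same
element of `P(d+1)`. -/
theorem Vset_union_of_ordCells_and_word_determines_cell
    (Ω : Set ℝ) (hΩ : Ω.OrdConnected)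
    (μ : MeasureTheory.Measure ℝ) [MeasureTheory.IsProbabilityMeasure μ] (hμΩ : μ Ω = 1)
    (hatom : ∀ ω ∈ Ω, μ {ω} = 0)
    (T : ℝ → ℝ) (hTmeas : Measurable T) (hTmaps : Set.MapsTo T Ω Ω)
    (hTpres : ∀ B : Set ℝ, MeasurableSet B → μ (T ⁻¹' B) = μ B)
    (d : ℕ) :
    (∀ π : Equiv.Perm (Fin (d + 2)),
      ordCell Ω T (d + 1) π ⊆ Vset Ω T (d + 1) ∨
        ordCell Ω T (d + 1) π ∩ Vset Ω T (d + 1) = ∅) ∧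
    (∃ S : Set (Equiv.Perm (Fin (d + 2))),
      Vset Ω T (d + 1) = ⋃ π ∈ S, ordCell Ω T (d + 1) π) ∧
    (∀ ω ω' : ℝ, ω ∈ Ω → ω' ∈ Ω →
      (∃ w : Fin 2 → Equiv.Perm (Fin (d + 1)),
        ω ∈ wordCell Ω T d 2 w ∧ ω' ∈ wordCell Ω T d 2 w) →
      ω ∉ Vset Ω T (d + 1) → ω' ∉ Vset Ω T (d + 1) →
      ∃ π : Equiv.Perm (Fin (d + 2)),
        ω ∈ ordCell Ω T (d + 1) π ∧ ω' ∈ ordCell Ω T (d + 1) π) := by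
  classical
  refine ⟨?_, ⟨{π | OPAux.AdjPat d π}, ?_⟩, ?_⟩
  · intro π
    by_cases hA : OPAux.AdjPat d π
    · left; intro ω hω
      exact (OPAux.mem_Vset_iff_adj Ω T d π hω).mpr hA
    · right
      rw [Set.eq_empty_iff_forall_notMem]
      rintro ω ⟨h1, h2⟩
      exact hA ((OPAux.mem_Vset_iff_adj Ω T d π h1).mp h2)
  · ext ω
    constructor
    · intro hV
      have hΩω : ω ∈ Ω := hV.1
      obtain ⟨π, hπ⟩ := OPAux.exists_hop (fun i : Fin (d + 2) => T^[(d + 1) - (i : ℕ)] ω)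
      have hcell : ω ∈ ordCell Ω T (d + 1) π := ⟨hΩω, hπ⟩
      exact Set.mem_biUnion ((OPAux.mem_Vset_iff_adj Ω T d π hcell).mp hV) hcell
    · intro h
      have h' : ∃ π, OPAux.AdjPat d π ∧ ω ∈ ordCell Ω T (d + 1) π := by simpa using h
      obtain ⟨π, hπS, hcell⟩ := h'
      exact (OPAux.mem_Vset_iff_adj Ω T d π hcell).mpr hπS
  · intro ω ω' hωΩ hω'Ω hw hV hV'
    obtain ⟨π, hπ⟩ := OPAux.exists_hop (fun i : Fin (d + 2) => T^[(d + 1) - (i : ℕ)] ω)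
    have hrel := rel_transfer hωΩ hω'Ω hw hV hV'
    have hπ' := OPAux.hop_of_rel_eq hrel hπ
    exact ⟨π, ⟨hωΩ, hπ⟩, ⟨hω'Ω, hπ'⟩⟩

end
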